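/- arXiv:2001.09187 — 2 statements merged into one kernel-verified Lean document; each statement's English description precedes it below -/
import Mathlib

section
/- Let C, Ĉ ∈ ℝ^{n×n} be SPSD matrices such that C − Ĉ is also SPSD. Then W₂(N(0,C), N(0,Ĉ)) ≤ trace(C − Ĉ)^{1/2}; equivalently, the infimum over all couplings H of N(0,C) and N(0,Ĉ) of ∫ ‖x − y‖₂² dH(x,y) is at most trace(C − Ĉ). -/
open MeasureTheory Matrix
open scoped ENNReal Classical

/-- The standard Gaussian measure on `ι → ℝ`. -/
noncomputable def stdGaussian (ι : Type*) [Fintype ι] : Measure (ι → ℝ) :=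
  Measure.pi fun _ => ProbabilityTheory.gaussianReal 0 1

/-- The unique SPSD square root of an SPSD matrix (junk value `0` otherwise). -/
noncomputable def psdSqrt {ι : Type*} [Fintype ι] [DecidableEq ι] (M : Matrix ι ι ℝ) :
    Matrix ι ι ℝ :=
  if h : M.PosSemidef then
    (h.1.eigenvectorUnitary : Matrix ι ι ℝ) *
      diagonal ((RCLike.ofReal : ℝ → ℝ) ∘ Real.sqrt ∘ h.1.eigenvalues) *
      (star h.1.eigenvectorUnitary : Matrix ι ι ℝ)
  else 0

/-- The centered Gaussian measure `N(0, C)` on `ι → ℝ` with covariance matrix `C`. -/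
noncomputable def gaussianOf {ι : Type*} [Fintype ι] [DecidableEq ι] (C : Matrix ι ι ℝ) :
    Measure (ι → ℝ) :=
  (stdGaussian ι).map (fun x => psdSqrt C *ᵥ x)

/-- `H` is a coupling of `ν` and `νhat`. -/
def IsCoupling {E F : Type*} [MeasurableSpace E] [MeasurableSpace F]
    (H : Measure (E × F)) (ν : Measure E) (νhat : Measure F) : Prop :=
  H.map Prod.fst = ν ∧ H.map Prod.snd = νhat

/-- The squared Wasserstein-2 distance (w.r.t. the Euclidean norm) between two measures
on `ι → ℝ`: the infimum over all couplings of the integral of the squared Euclidean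
distance. -/
noncomputable def wass2sq {ι : Type*} [Fintype ι] (ν νhat : Measure (ι → ℝ)) : ℝ≥0∞ :=
  ⨅ (H : Measure ((ι → ℝ) × (ι → ℝ))) (_ : IsCoupling H ν νhat),
    ∫⁻ p, ENNReal.ofReal (∑ i, (p.1 i - p.2 i) ^ 2) ∂H

lemma psdSqrt_spec {n : ℕ} {M : Matrix (Fin n) (Fin n) ℝ} (h : M.PosSemidef) :
    (psdSqrt M).PosSemidef ∧ psdSqrt M * psdSqrt M = M := by
  rw [psdSqrt, dif_pos h]
  have hU : (star h.1.eigenvectorUnitary : Matrix (Fin n) (Fin n) ℝ) *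
      (h.1.eigenvectorUnitary : Matrix (Fin n) (Fin n) ℝ) = 1 := Unitary.coe_star_mul_self _
  constructor
  · have hD : (diagonal ((RCLike.ofReal : ℝ → ℝ) ∘ Real.sqrt ∘ h.1.eigenvalues)).PosSemidef :=
      posSemidef_diagonal_iff.mpr (fun i => by simp [Real.sqrt_nonneg])
    have := hD.mul_mul_conjTranspose_same (h.1.eigenvectorUnitary : Matrix (Fin n) (Fin n) ℝ)
    simpa [Unitary.coe_star, star_eq_conjTranspose] using this
  · conv_rhs => rw [h.1.spectral_theorem]
    rw [Unitary.conjStarAlgAut_apply]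
    calc _ = (h.1.eigenvectorUnitary : Matrix (Fin n) (Fin n) ℝ) *
          diagonal ((RCLike.ofReal : ℝ → ℝ) ∘ Real.sqrt ∘ h.1.eigenvalues) *
          ((star h.1.eigenvectorUnitary : Matrix (Fin n) (Fin n) ℝ) *
          (h.1.eigenvectorUnitary : Matrix (Fin n) (Fin n) ℝ)) *
          diagonal ((RCLike.ofReal : ℝ → ℝ) ∘ Real.sqrt ∘ h.1.eigenvalues) *
          (star h.1.eigenvectorUnitary : Matrix (Fin n) (Fin n) ℝ) := by
            simp only [Matrix.mul_assoc]
      _ = _ := by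
        rw [hU, Matrix.mul_one, Matrix.mul_assoc _ (diagonal _) (diagonal _),
          diagonal_mul_diagonal]
        congr 3
        funext i
        simp [Real.mul_self_sqrt (h.eigenvalues_nonneg i)]

section aux

open MeasureTheory.Measure Real ProbabilityTheory Filter
open scoped NNReal

instance (ι : Type*) [Fintype ι] : IsProbabilityMeasure (stdGaussian ι) := by
  unfold _root_.stdGaussian; infer_instance

noncomputable def pdf1 (x : ℝ) : ℝ := (Real.sqrt (2 * Real.pi))⁻¹ * Real.exp (-x^2/2)

lemma gaussianPDFReal_zero_one (x : ℝ) : gaussianPDFReal 0 1 x = pdf1 x := by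
  simp [gaussianPDFReal, pdf1]

lemma hasDerivAt_negexp (x : ℝ) :
    HasDerivAt (fun t : ℝ => -Real.exp (-t^2/2)) (x * Real.exp (-x^2/2)) x := by
  have h1 : HasDerivAt (fun t : ℝ => -t^2/2) (-x) x := by
    have : HasDerivAt (fun t : ℝ => -t^2/2) _ x := ((hasDerivAt_pow 2 x).neg).div_const 2
    convert this using 1
    ring
  have : HasDerivAt (fun t : ℝ => -Real.exp (-t^2/2)) _ x := (h1.exp).neg
  convert this using 1
  ring

lemma integrable_exp_half : Integrable (fun x : ℝ => Real.exp (-x^2/2)) := by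
  have := integrable_exp_neg_mul_sq (b := (1:ℝ)/2) (by norm_num)
  convert this using 2 with x
  ring_nf

lemma integrable_mul_exp_half : Integrable (fun x : ℝ => x * Real.exp (-x^2/2)) := by
  have := integrable_mul_exp_neg_mul_sq (b := (1:ℝ)/2) (by norm_num)
  convert this using 2 with x
  ring_nf

lemma integrable_sq_mul_exp_half : Integrable (fun x : ℝ => x^2 * Real.exp (-x^2/2)) := by
  have := integrable_rpow_mul_exp_neg_mul_sq (b := (1:ℝ)/2) (s := 2) (by norm_num) (by norm_num)
  have h2 : ∀ x : ℝ, x ^ (2:ℝ) = x ^ (2:ℕ) := fun x => Real.rpow_natCast x 2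
  convert this using 2 with x
  rw [h2]
  ring_nf

lemma integral_mul_exp_half : ∫ x : ℝ, x * Real.exp (-x^2/2) = 0 := by
  exact integral_eq_zero_of_hasDerivAt_of_integrable hasDerivAt_negexp
    integrable_mul_exp_half (integrable_exp_half.neg)

lemma integral_exp_half : ∫ x : ℝ, Real.exp (-x^2/2) = Real.sqrt (2 * Real.pi) := by
  have := integral_gaussian ((1:ℝ)/2)
  rw [show Real.pi / ((1:ℝ)/2) = 2 * Real.pi by ring] at this
  rw [← this]
  congr 1 with x
  ring_nf

lemma integral_sq_mul_exp_half : ∫ x : ℝ, x^2 * Real.exp (-x^2/2) = Real.sqrt (2 * Real.pi) := by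
  have hu : ∀ x : ℝ, HasDerivAt (fun t : ℝ => t) (1 : ℝ) x := fun x => hasDerivAt_id x
  have hintA : Integrable ((fun t : ℝ => t) * fun t : ℝ => t * Real.exp (-t^2/2)) := by
    apply integrable_sq_mul_exp_half.congr
    filter_upwards with x
    simp [Pi.mul_apply]; ring
  have hintB : Integrable ((fun _ : ℝ => (1:ℝ)) * fun t : ℝ => -Real.exp (-t^2/2)) := by
    apply integrable_exp_half.neg.congr
    filter_upwards with x
    simp [Pi.mul_apply]
  have hintC : Integrable ((fun t : ℝ => t) * fun t : ℝ => -Real.exp (-t^2/2)) := by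
    apply integrable_mul_exp_half.neg.congr
    filter_upwards with x
    simp [Pi.mul_apply]
  have key := integral_mul_deriv_eq_deriv_mul_of_integrable (u := fun t : ℝ => t)
    (v := fun t : ℝ => -Real.exp (-t^2/2)) (u' := fun _ => (1:ℝ))
    (v' := fun t : ℝ => t * Real.exp (-t^2/2))
    (fun x _ => hu x) (fun x _ => hasDerivAt_negexp x) hintA hintB hintC
  have h1 : ∫ x : ℝ, x * (x * Real.exp (-x^2/2)) = ∫ x : ℝ, x^2 * Real.exp (-x^2/2) := by
    congr 1 with x; ring
  have h2 : ∫ x : ℝ, (1:ℝ) * (-Real.exp (-x^2/2)) = -Real.sqrt (2*Real.pi) := by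
    simp only [one_mul]
    rw [integral_neg, integral_exp_half]
  rw [h1] at key
  rw [key, h2, neg_neg]

lemma gaussianReal_eq : gaussianReal 0 1 =
    (volume : Measure ℝ).withDensity (fun x => ENNReal.ofReal (pdf1 x)) := by
  rw [gaussianReal_of_var_ne_zero 0 one_ne_zero]
  congr 1
  funext x
  rw [gaussianPDF_def]
  simp only [gaussianPDFReal_zero_one]

lemma pdf1_meas : Measurable pdf1 := by
  unfold pdf1
  fun_prop

lemma pdf1_nonneg (x : ℝ) : 0 ≤ pdf1 x :=
  mul_nonneg (inv_nonneg.2 (Real.sqrt_nonneg _)) (Real.exp_nonneg _)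

lemma integrable_gaussian_iff (g : ℝ → ℝ) :
    Integrable g (gaussianReal 0 1) ↔ Integrable (fun x => pdf1 x * g x) := by
  rw [gaussianReal_eq]
  have : (fun x => ENNReal.ofReal (pdf1 x)) = (fun x => ((pdf1 x).toNNReal : ℝ≥0∞)) := rfl
  rw [this, integrable_withDensity_iff_integrable_coe_smul (pdf1_meas.real_toNNReal)]
  constructor <;> intro h <;> apply h.congr <;> filter_upwards with x <;>
    simp [NNReal.smul_def, Real.coe_toNNReal _ (pdf1_nonneg x)]

lemma integral_gaussian_eq (g : ℝ → ℝ) :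
    ∫ x, g x ∂(gaussianReal 0 1) = ∫ x, pdf1 x * g x := by
  rw [gaussianReal_eq]
  have : (fun x => ENNReal.ofReal (pdf1 x)) = (fun x => ((pdf1 x).toNNReal : ℝ≥0∞)) := rfl
  rw [this, integral_withDensity_eq_integral_smul (pdf1_meas.real_toNNReal)]
  congr 1 with x
  simp [NNReal.smul_def, Real.coe_toNNReal _ (pdf1_nonneg x)]

lemma sqrt_two_pi_pos : (0:ℝ) < Real.sqrt (2 * Real.pi) :=
  Real.sqrt_pos.2 (by positivity)

lemma integrable_id_gaussian : Integrable (fun x : ℝ => x) (gaussianReal 0 1) := by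
  rw [integrable_gaussian_iff]
  apply (integrable_mul_exp_half.const_mul (Real.sqrt (2 * Real.pi))⁻¹).congr
  filter_upwards with x
  unfold pdf1; ring

lemma integrable_sq_gaussian : Integrable (fun x : ℝ => x * x) (gaussianReal 0 1) := by
  rw [integrable_gaussian_iff]
  apply (integrable_sq_mul_exp_half.const_mul (Real.sqrt (2 * Real.pi))⁻¹).congr
  filter_upwards with x
  unfold pdf1; ring

lemma integral_id_gaussian : ∫ x, x ∂(gaussianReal 0 1) = 0 := by
  rw [integral_gaussian_eq]
  have : ∀ x : ℝ, pdf1 x * x = (Real.sqrt (2 * Real.pi))⁻¹ * (x * Real.exp (-x^2/2)) := by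
    intro x; unfold pdf1; ring
  simp only [this]
  rw [integral_const_mul, integral_mul_exp_half, mul_zero]

lemma integral_sq_gaussian : ∫ x, x * x ∂(gaussianReal 0 1) = 1 := by
  rw [integral_gaussian_eq]
  have : ∀ x : ℝ, pdf1 x * (x * x) = (Real.sqrt (2 * Real.pi))⁻¹ * (x^2 * Real.exp (-x^2/2)) := by
    intro x; unfold pdf1; ring
  simp only [this]
  rw [integral_const_mul, integral_sq_mul_exp_half, inv_mul_cancel₀ sqrt_two_pi_pos.ne']
theorem myIntegrable.fin_nat_prod {n : ℕ} {μ : Fin n → Measure ℝ}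
    [∀ i, IsProbabilityMeasure (μ i)]
    {f : Fin n → ℝ → ℝ} (hf : ∀ i, Integrable (f i) (μ i)) :
    Integrable (fun (x : Fin n → ℝ) ↦ ∏ i, f i (x i)) (Measure.pi μ) := by
  induction n with
  | zero =>
      simp only [Finset.univ_eq_empty, Finset.prod_empty]
      exact integrable_const _
  | succ m ih =>
      have hmp := ((measurePreserving_piFinSuccAbove μ 0).symm)
      rw [← hmp.integrable_comp_emb (MeasurableEquiv.measurableEmbedding _)]
      simp_rw [MeasurableEquiv.piFinSuccAbove_symm_apply, Fin.insertNthEquiv,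
        Fin.prod_univ_succ, Fin.insertNth_zero]
      simp only [Fin.zero_succAbove, Function.comp_def, Fin.cons_zero, Fin.cons_succ,
        Equiv.coe_fn_mk]
      have h2 : Integrable (fun (x : Fin m → ℝ) ↦ ∏ j, f (Fin.succ j) (x j))
          (Measure.pi (fun j => μ (Fin.succ j))) := ih (fun i ↦ hf _)
      exact Integrable.mul_prod (hf 0) h2

theorem myIntegral.fin_nat_prod {n : ℕ} {μ : Fin n → Measure ℝ}
    [∀ i, IsProbabilityMeasure (μ i)]
    (f : Fin n → ℝ → ℝ) :
    ∫ x : Fin n → ℝ, ∏ i, f i (x i) ∂(Measure.pi μ) = ∏ i, ∫ x, f i x ∂(μ i) := by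
  induction n with
  | zero =>
      simp
  | succ m ih =>
      calc
        _ = ∫ x : ℝ × (Fin m → ℝ),
            f 0 x.1 * ∏ i : Fin m, f (Fin.succ i) (x.2 i)
              ∂((μ 0).prod (Measure.pi (fun j => μ (Fin.succ j)))) := by
          rw [← ((measurePreserving_piFinSuccAbove μ 0).symm).integral_comp']
          simp_rw [MeasurableEquiv.piFinSuccAbove_symm_apply, Fin.insertNthEquiv,
            Fin.prod_univ_succ, Fin.insertNth_zero, Equiv.coe_fn_mk, Fin.cons_succ,
            Fin.zero_succAbove, Fin.cons_zero, cast_eq]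
        _ = (∫ x, f 0 x ∂(μ 0)) * ∏ i : Fin m, ∫ x, f (Fin.succ i) x ∂(μ (Fin.succ i)) := by
          rw [← ih, ← integral_prod_mul]
        _ = ∏ i, ∫ x, f i x ∂(μ i) := by rw [Fin.prod_univ_succ]

section coord
variable {n : ℕ} (j k : Fin n)

noncomputable def gfun (j k : Fin n) (i : Fin n) (t : ℝ) : ℝ :=
  (if i = j then t else 1) * (if i = k then t else 1)

lemma gfun_integrable (i : Fin n) : Integrable (gfun j k i) (gaussianReal 0 1) := by
  unfold gfun
  by_cases hij : i = j
  · by_cases hik : i = k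
    · simp only [if_pos hij, if_pos hik]
      exact integrable_sq_gaussian
    · simp only [if_pos hij, if_neg hik, mul_one]
      exact integrable_id_gaussian
  · by_cases hik : i = k
    · simp only [if_neg hij, if_pos hik, one_mul]
      exact integrable_id_gaussian
    · simp only [if_neg hij, if_neg hik, mul_one]
      exact integrable_const 1

lemma gfun_prod (x : Fin n → ℝ) : ∏ i, gfun j k i (x i) = x j * x k := by
  unfold gfun
  rw [Finset.prod_mul_distrib]
  simp [Finset.prod_ite_eq']

lemma integrable_coord_mul : Integrable (fun x => x j * x k) (stdGaussian (Fin n)) := by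
  have h := myIntegrable.fin_nat_prod (μ := fun _ => gaussianReal 0 1) (gfun_integrable j k)
  apply h.congr
  filter_upwards with x
  exact gfun_prod j k x

lemma integral_coord_mul :
    ∫ x, x j * x k ∂(stdGaussian (Fin n)) = if j = k then 1 else 0 := by
  have h : ∫ x, x j * x k ∂(stdGaussian (Fin n))
      = ∏ i, ∫ t, gfun j k i t ∂(gaussianReal 0 1) := by
    rw [← myIntegral.fin_nat_prod (μ := fun _ => gaussianReal 0 1) (gfun j k)]
    show ∫ (x : Fin n → ℝ), x j * x k ∂_ = _
    congr 1 with x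
    exact (gfun_prod j k x).symm
  rw [h]
  by_cases hjk : j = k
  · subst hjk
    rw [if_pos rfl]
    apply Finset.prod_eq_one
    intro i _
    unfold gfun
    by_cases hij : i = j
    · simp only [hij, if_pos rfl]
      exact integral_sq_gaussian
    · simp only [if_neg hij, mul_one]
      simp
  · rw [if_neg hjk]
    apply Finset.prod_eq_zero (Finset.mem_univ j)
    unfold gfun
    simp only [if_pos rfl, if_neg hjk, mul_one]
    exact integral_id_gaussian

end coord

section mainint
variable {n : ℕ} (M : Matrix (Fin n) (Fin n) ℝ)

lemma sq_expand (x : Fin n → ℝ) :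
    ∑ i, ((M *ᵥ x) i)^2 = ∑ i, ∑ j, ∑ k, M i j * M i k * (x j * x k) := by
  apply Finset.sum_congr rfl
  intro i _
  rw [mulVec, dotProduct, pow_two, Finset.sum_mul_sum]
  apply Finset.sum_congr rfl; intro j _
  apply Finset.sum_congr rfl; intro k _
  ring

lemma integrable_main :
    Integrable (fun x => ∑ i, ((M *ᵥ x) i)^2) (stdGaussian (Fin n)) := by
  have h : Integrable (fun x => ∑ i, ∑ j, ∑ k : Fin n, M i j * M i k * (x j * x k))
      (stdGaussian (Fin n)) := by
    apply integrable_finset_sum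
    intro i _
    apply integrable_finset_sum
    intro j _
    apply integrable_finset_sum
    intro k _
    exact (integrable_coord_mul j k).const_mul _
  apply h.congr
  filter_upwards with x
  exact (sq_expand M x).symm

lemma integral_main :
    ∫ x, ∑ i, ((M *ᵥ x) i)^2 ∂(stdGaussian (Fin n)) = ∑ i, ∑ j, M i j ^ 2 := by
  have h : ∫ x, ∑ i, ((M *ᵥ x) i)^2 ∂(stdGaussian (Fin n))
      = ∫ x, ∑ i, ∑ j, ∑ k : Fin n, M i j * M i k * (x j * x k) ∂(stdGaussian (Fin n)) := by
    congr 1 with x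
    exact sq_expand M x
  rw [h]
  rw [integral_finset_sum _ (fun i _ => by
    apply integrable_finset_sum; intro j _; apply integrable_finset_sum; intro k _
    exact (integrable_coord_mul j k).const_mul _)]
  apply Finset.sum_congr rfl
  intro i _
  rw [integral_finset_sum _ (fun j _ => by
    apply integrable_finset_sum; intro k _
    exact (integrable_coord_mul j k).const_mul _)]
  apply Finset.sum_congr rfl
  intro j _
  rw [integral_finset_sum _ (fun k _ => (integrable_coord_mul j k).const_mul _)]
  have : ∀ k : Fin n, ∫ x, M i j * M i k * (x j * x k) ∂(stdGaussian (Fin n))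
      = M i j * M i k * (if j = k then 1 else 0) := by
    intro k
    rw [integral_const_mul, integral_coord_mul]
  rw [Finset.sum_congr rfl (fun k _ => this k)]
  simp only [mul_ite, mul_one, mul_zero, Finset.sum_ite_eq, Finset.mem_univ, ite_true]
  exact (pow_two _).symm
end mainint

section matside
variable {n : ℕ}

lemma psd_diag_nonneg {P : Matrix (Fin n) (Fin n) ℝ} (hP : P.PosSemidef) (i : Fin n) :
    0 ≤ P i i := by
  have h := hP.dotProduct_mulVec_nonneg (Pi.single i 1)
  simpa [dotProduct, mulVec, Pi.single_apply, Finset.sum_ite_eq, mul_comm] using h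

lemma psd_trace_nonneg {P : Matrix (Fin n) (Fin n) ℝ} (hP : P.PosSemidef) : 0 ≤ P.trace := by
  apply Finset.sum_nonneg
  intro i _
  exact psd_diag_nonneg hP i

lemma trace_mul_psd_nonneg {P Q : Matrix (Fin n) (Fin n) ℝ} (hP : P.PosSemidef)
    (hQ : Q.PosSemidef) : 0 ≤ (P * Q).trace := by
  obtain ⟨B, hB⟩ : ∃ B : Matrix (Fin n) (Fin n) ℝ, Q = Bᴴ * B :=
    ⟨psdSqrt Q, by rw [(psdSqrt_spec hQ).1.1.eq, (psdSqrt_spec hQ).2]⟩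
  have h1 : (P * Q).trace = (B * P * Bᴴ).trace := by
    rw [hB]
    rw [show P * (Bᴴ * B) = (P * Bᴴ) * B by rw [Matrix.mul_assoc]]
    rw [Matrix.trace_mul_comm, Matrix.mul_assoc, ← Matrix.mul_assoc]
  rw [h1]
  exact psd_trace_nonneg (hP.mul_mul_conjTranspose_same B)

lemma psd_dotProduct_nonneg {P : Matrix (Fin n) (Fin n) ℝ} (hP : P.PosSemidef) (v : Fin n → ℝ) :
    0 ≤ v ⬝ᵥ (P *ᵥ v) := by
  have := hP.dotProduct_mulVec_nonneg v
  simpa using this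

lemma psd_mulVec_eq_zero {P : Matrix (Fin n) (Fin n) ℝ} (hP : P.PosSemidef) {v : Fin n → ℝ}
    (h : v ⬝ᵥ (P *ᵥ v) = 0) : P *ᵥ v = 0 := by
  rw [← hP.dotProduct_mulVec_zero_iff]
  simpa using h

lemma sqrt_mono_aux {S T : Matrix (Fin n) (Fin n) ℝ} (hS : S.PosSemidef) (hT : T.PosSemidef)
    (h : (S * S - T * T).PosSemidef) : (S - T).PosSemidef := by
  have hM : (S - T).IsHermitian := hS.1.sub hT.1
  apply hM.posSemidef_iff_eigenvalues_nonneg.mpr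
  intro i; show 0 ≤ hM.eigenvalues i
  by_contra hneg
  push_neg at hneg
  set lam := hM.eigenvalues i with hlam
  set v : Fin n → ℝ := ⇑(hM.eigenvectorBasis i) with hv
  have hev : (S - T) *ᵥ v = lam • v := hM.mulVec_eigenvectorBasis i
  have hvnorm : ‖hM.eigenvectorBasis i‖ = 1 := (hM.eigenvectorBasis).orthonormal.1 i
  have hvne : v ≠ 0 := by
    intro h0
    rw [hv] at h0
    have : (hM.eigenvectorBasis i) = 0 := by
      ext j
      exact congrFun h0 j
    rw [this, norm_zero] at hvnorm
    norm_num at hvnorm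
  -- key inequality
  have key : 0 ≤ lam * (v ⬝ᵥ (S *ᵥ v) + v ⬝ᵥ (T *ᵥ v)) := by
    have h0 := psd_dotProduct_nonneg h v
    have hexp : S * S - T * T = S * (S - T) + (S - T) * T := by noncomm_ring
    rw [hexp, add_mulVec, dotProduct_add, ← mulVec_mulVec, ← mulVec_mulVec, hev] at h0
    rw [mulVec_smul, dotProduct_smul] at h0
    have hsym : v ⬝ᵥ ((S - T) *ᵥ (T *ᵥ v)) = lam * (v ⬝ᵥ (T *ᵥ v)) := by
      rw [dotProduct_mulVec v (S - T), ← mulVec_transpose]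
      have : (S - T)ᵀ = S - T := by
        have := hM
        rwa [IsHermitian, conjTranspose_eq_transpose_of_trivial] at this
      rw [this, hev]
      rw [smul_dotProduct]
      rfl
    rw [hsym] at h0
    calc (0:ℝ) ≤ lam • (v ⬝ᵥ S *ᵥ v) + lam * (v ⬝ᵥ T *ᵥ v) := h0
    _ = lam * (v ⬝ᵥ (S *ᵥ v) + v ⬝ᵥ (T *ᵥ v)) := by rw [smul_eq_mul]; ring
  have hSnn := psd_dotProduct_nonneg hS v
  have hTnn := psd_dotProduct_nonneg hT v
  have hsum : v ⬝ᵥ (S *ᵥ v) + v ⬝ᵥ (T *ᵥ v) = 0 := by nlinarith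
  have hSv : S *ᵥ v = 0 := psd_mulVec_eq_zero hS (by linarith)
  have hTv : T *ᵥ v = 0 := psd_mulVec_eq_zero hT (by linarith)
  have : lam • v = 0 := by
    rw [← hev, sub_mulVec, hSv, hTv, sub_zero]
  rcases smul_eq_zero.mp this with h1 | h2
  · exact absurd h1 (ne_of_lt hneg)
  · exact hvne h2

lemma frobenius_le_trace {S T : Matrix (Fin n) (Fin n) ℝ} (hS : S.PosSemidef)
    (hT : T.PosSemidef) (hsub : (S * S - T * T).PosSemidef) :
    ∑ i, ∑ j, ((S - T) i j) ^ 2 ≤ (S * S - T * T).trace := by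
  set M := S - T with hMdef
  have hMpsd : M.PosSemidef := sqrt_mono_aux hS hT hsub
  have hMsymm : Mᵀ = M := by
    have := hMpsd.1
    rwa [IsHermitian, conjTranspose_eq_transpose_of_trivial] at this
  have h1 : ∑ i, ∑ j, (M i j) ^ 2 = (M * M).trace := by
    rw [Matrix.trace]
    apply Finset.sum_congr rfl
    intro i _
    rw [Matrix.diag_apply, Matrix.mul_apply]
    apply Finset.sum_congr rfl
    intro j _
    rw [pow_two]
    congr 1
    conv_lhs => rw [← hMsymm]
    rfl
  rw [h1]
  have h2 : (S * S - T * T) - M * M = M * T + T * M := by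
    rw [hMdef]; noncomm_ring
  have h3 : 0 ≤ (M * T + T * M).trace := by
    rw [Matrix.trace_add]
    have := trace_mul_psd_nonneg hMpsd hT
    have h4 : (T * M).trace = (M * T).trace := Matrix.trace_mul_comm T M
    linarith
  have h5 : (S * S - T * T).trace = (M * M).trace + (M * T + T * M).trace := by
    rw [← Matrix.trace_add]
    congr 1
    rw [← h2]
    noncomm_ring
  linarith

end matside

section glue
variable {n : ℕ}

lemma measurable_mulVec' (A : Matrix (Fin n) (Fin n) ℝ) :
    Measurable (fun x : Fin n → ℝ => A *ᵥ x) := by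
  apply measurable_pi_lambda
  intro i
  simp only [mulVec, dotProduct]
  exact Finset.measurable_sum _ (fun j _ => (measurable_pi_apply j).const_mul _)

end glue

end aux

/-- if `C`, `Ĉ` and `C - Ĉ` are SPSD then
`W₂(N(0,C), N(0,Ĉ))² ≤ trace (C - Ĉ)`. -/
theorem stmt0 {n : ℕ} (C Chat : Matrix (Fin n) (Fin n) ℝ)
    (hC : C.PosSemidef) (hChat : Chat.PosSemidef) (hdiff : (C - Chat).PosSemidef) :
    wass2sq (gaussianOf C) (gaussianOf Chat) ≤ ENNReal.ofReal (C - Chat).trace := by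
  classical
  set S := psdSqrt C with hSdef
  set T := psdSqrt Chat with hTdef
  have hSpsd : S.PosSemidef := (psdSqrt_spec hC).1
  have hTpsd : T.PosSemidef := (psdSqrt_spec hChat).1
  have hSS : S * S = C := (psdSqrt_spec hC).2
  have hTT : T * T = Chat := (psdSqrt_spec hChat).2
  have hsub : (S * S - T * T).PosSemidef := by rw [hSS, hTT]; exact hdiff
  set M := S - T with hMdef
  -- the coupling
  set φ : (Fin n → ℝ) → (Fin n → ℝ) × (Fin n → ℝ) := fun x => (S *ᵥ x, T *ᵥ x) with hφ
  have hφm : Measurable φ := (measurable_mulVec' S).prodMk (measurable_mulVec' T)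
  set H : Measure ((Fin n → ℝ) × (Fin n → ℝ)) := (stdGaussian (Fin n)).map φ with hH
  have hcoup : IsCoupling H (gaussianOf C) (gaussianOf Chat) := by
    constructor
    · rw [hH, Measure.map_map measurable_fst hφm]
      rfl
    · rw [hH, Measure.map_map measurable_snd hφm]
      rfl
  have hle : wass2sq (gaussianOf C) (gaussianOf Chat)
      ≤ ∫⁻ p, ENNReal.ofReal (∑ i, (p.1 i - p.2 i) ^ 2) ∂H := iInf₂_le H hcoup
  have hg : Measurable (fun p : (Fin n → ℝ) × (Fin n → ℝ) =>
      ENNReal.ofReal (∑ i, (p.1 i - p.2 i) ^ 2)) := by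
    apply ENNReal.measurable_ofReal.comp
    apply Finset.measurable_sum
    intro i _
    exact (((measurable_pi_apply i).comp measurable_fst).sub
      ((measurable_pi_apply i).comp measurable_snd)).pow_const 2
  have hmap : ∫⁻ p, ENNReal.ofReal (∑ i, (p.1 i - p.2 i) ^ 2) ∂H
      = ∫⁻ x, ENNReal.ofReal (∑ i, ((M *ᵥ x) i) ^ 2) ∂(stdGaussian (Fin n)) := by
    rw [hH, lintegral_map hg hφm]
    congr 1 with x
    congr 1
    apply Finset.sum_congr rfl
    intro i _
    rw [hMdef, Matrix.sub_mulVec]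
    rfl
  have hofReal : ∫⁻ x, ENNReal.ofReal (∑ i, ((M *ᵥ x) i) ^ 2) ∂(stdGaussian (Fin n))
      = ENNReal.ofReal (∫ x, ∑ i, ((M *ᵥ x) i) ^ 2 ∂(stdGaussian (Fin n))) := by
    rw [← ofReal_integral_eq_lintegral_ofReal (integrable_main M)]
    filter_upwards with x
    exact Finset.sum_nonneg (fun i _ => sq_nonneg _)
  have hval : ∫ x, ∑ i, ((M *ᵥ x) i) ^ 2 ∂(stdGaussian (Fin n)) = ∑ i, ∑ j, M i j ^ 2 :=
    integral_main M
  have hfrob : ∑ i, ∑ j, M i j ^ 2 ≤ (C - Chat).trace := by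
    have := frobenius_le_trace hSpsd hTpsd hsub
    rwa [hSS, hTT] at this
  calc wass2sq (gaussianOf C) (gaussianOf Chat)
      ≤ ∫⁻ p, ENNReal.ofReal (∑ i, (p.1 i - p.2 i) ^ 2) ∂H := hle
    _ = ENNReal.ofReal (∫ x, ∑ i, ((M *ᵥ x) i) ^ 2 ∂(stdGaussian (Fin n))) := by
        rw [hmap, hofReal]
    _ ≤ ENNReal.ofReal (C - Chat).trace := by
        rw [hval]
        exact ENNReal.ofReal_le_ofReal hfrob
end

section
/- Let A, E ∈ ℝ^{n×n} be symmetric matrices such that Ã := A − E is SPSD and ‖E‖₂ ≤ δ for some δ > 0. Let I ⊆ {1,…,n} be such that A(I,I) is invertible, suppose ρ := δ ‖A(I,I)^{-1}‖₂ < 1, and set W := A(I,I)^{-1} A(I,I^c). Then Ã(I,I) is invertible and the Schur complements S := A(I^c,I^c) − A(I^c,I) A(I,I)^{-1} A(I,I^c) and S̃ := Ã(I^c,I^c) − Ã(I^c,I) Ã(I,I)^{-1} Ã(I,I^c) satisfy ‖S − S̃‖₂ ≤ δ (1 + ‖W‖₂)² / (1 − ρ). -/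
open Matrix
open scoped Classical Matrix.Norms.L2Operator

/-- The submatrix `A(I, J)` of `A` with rows indexed by `I` and columns by `J`. -/
def subm {n : ℕ} (A : Matrix (Fin n) (Fin n) ℝ) (I J : Finset (Fin n)) :
    Matrix I J ℝ :=
  A.submatrix Subtype.val Subtype.val

/-- The submatrix `A(:, I)` of `A` with all rows and columns indexed by `I`. -/
def colsOf {n : ℕ} (A : Matrix (Fin n) (Fin n) ℝ) (I : Finset (Fin n)) :
    Matrix (Fin n) I ℝ :=
  A.submatrix id Subtype.val

/-- The cross approximation `A_I = A(:,I) A(I,I)⁻¹ A(:,I)ᵀ` of `A` associated with `I`. -/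
noncomputable def crossApprox {n : ℕ} (A : Matrix (Fin n) (Fin n) ℝ) (I : Finset (Fin n)) :
    Matrix (Fin n) (Fin n) ℝ :=
  colsOf A I * (subm A I I)⁻¹ * (colsOf A I)ᵀ


section Aux

lemma myconj {m k : Type*} [Fintype m] [Fintype k] (M : Matrix m k ℝ) : Mᴴ = Mᵀ := by
  ext i j; simp [Matrix.conjTranspose_apply]

lemma norm_transpose_real {m k : Type*} [Fintype m] [Fintype k] [DecidableEq m]
    (M : Matrix m k ℝ) : ‖Mᵀ‖ = ‖M‖ := by
  rw [← myconj, Matrix.l2_opNorm_conjTranspose]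

lemma norm_one_le_mat {m : Type*} [Fintype m] [DecidableEq m] :
    ‖(1 : Matrix m m ℝ)‖ ≤ 1 := by
  rw [Matrix.cstar_norm_def, _root_.map_one]
  exact ContinuousLinearMap.norm_id_le

lemma norm_sel_le {n : ℕ} (I : Finset (Fin n)) :
    ‖((1 : Matrix (Fin n) (Fin n) ℝ).submatrix (Subtype.val : I → Fin n) id)‖ ≤ 1 := by
  set P := (1 : Matrix (Fin n) (Fin n) ℝ).submatrix (Subtype.val : I → Fin n) id with hP
  have h1 : P * Pᵀ = 1 := by
    rw [hP, Matrix.transpose_submatrix, Matrix.transpose_one,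
      ← Matrix.submatrix_mul _ _ _ id _ Function.bijective_id, mul_one,
      Matrix.submatrix_one _ Subtype.val_injective]
  have h2 : ‖P‖ * ‖P‖ ≤ 1 := by
    have := Matrix.l2_opNorm_conjTranspose_mul_self Pᴴ
    rw [Matrix.conjTranspose_conjTranspose, Matrix.l2_opNorm_conjTranspose] at this
    rw [← this, myconj, h1]
    exact norm_one_le_mat
  nlinarith [norm_nonneg P]

lemma norm_subm_le {n : ℕ} (M : Matrix (Fin n) (Fin n) ℝ) (I J : Finset (Fin n)) :
    ‖subm M I J‖ ≤ ‖M‖ := by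
  set P := (1 : Matrix (Fin n) (Fin n) ℝ).submatrix (Subtype.val : I → Fin n) id with hP
  set Q := (1 : Matrix (Fin n) (Fin n) ℝ).submatrix id (Subtype.val : J → Fin n) with hQ
  have hfac : subm M I J = P * M * Q := by
    have h1 : P * M = M.submatrix Subtype.val id := by
      rw [hP, ← Matrix.submatrix_id_id M,
        ← Matrix.submatrix_mul _ _ _ id _ Function.bijective_id, one_mul,
        Matrix.submatrix_id_id]
    rw [h1, show subm M I J = (M * 1).submatrix Subtype.val Subtype.val by
        rw [mul_one]; rfl,
      Matrix.submatrix_mul _ _ _ id _ Function.bijective_id]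
  have hQn : ‖Q‖ ≤ 1 := by
    have : Qᵀ = (1 : Matrix (Fin n) (Fin n) ℝ).submatrix (Subtype.val : J → Fin n) id := by
      rw [hQ, Matrix.transpose_submatrix, Matrix.transpose_one]
    calc ‖Q‖ = ‖Qᵀ‖ := (norm_transpose_real Q).symm
    _ ≤ 1 := by rw [this]; exact norm_sel_le J
  calc ‖subm M I J‖ = ‖P * M * Q‖ := by rw [hfac]
  _ ≤ ‖P * M‖ * ‖Q‖ := Matrix.l2_opNorm_mul _ _
  _ ≤ (‖P‖ * ‖M‖) * ‖Q‖ := by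
      have := Matrix.l2_opNorm_mul P M
      have hq := norm_nonneg Q
      nlinarith
  _ ≤ ‖M‖ := by
      have hp : ‖P‖ ≤ 1 := norm_sel_le I
      have h2 : ‖P‖ * ‖Q‖ ≤ 1 := mul_le_one₀ hp (norm_nonneg Q) hQn
      nlinarith [norm_nonneg M, mul_nonneg (norm_nonneg P) (norm_nonneg Q)]

end Aux

lemma subm_sub {n : ℕ} (M N : Matrix (Fin n) (Fin n) ℝ) (I J : Finset (Fin n)) :
    subm (M - N) I J = subm M I J - subm N I J := by
  ext i j; simp [subm]

lemma subm_transpose_symm {n : ℕ} {M : Matrix (Fin n) (Fin n) ℝ} (hM : M.IsSymm)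
    (I J : Finset (Fin n)) : (subm M I J)ᵀ = subm M J I := by
  unfold subm
  rw [Matrix.transpose_submatrix, hM.eq]

set_option maxHeartbeats 2000000 in
/-- let `A`, `E` be symmetric with `Ã = A - E` SPSD and `‖E‖₂ ≤ δ`, let
`A(I,I)` be invertible with `ρ = δ ‖A(I,I)⁻¹‖₂ < 1`, and `W = A(I,I)⁻¹ A(I,Iᶜ)`. Then
`Ã(I,I)` is invertible and the Schur complements `S`, `S̃` of `A(I,I)`, `Ã(I,I)` satisfy
`‖S - S̃‖₂ ≤ δ (1 + ‖W‖₂)² / (1 - ρ)`. -/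
theorem stmt11 {n : ℕ} (A E : Matrix (Fin n) (Fin n) ℝ)
    (hA : A.IsSymm) (hE : E.IsSymm) (hAt : (A - E).PosSemidef)
    (δ : ℝ) (hδ : 0 < δ) (hEδ : ‖E‖ ≤ δ)
    (I : Finset (Fin n)) (hinv : IsUnit (subm A I I))
    (hρ : δ * ‖(subm A I I)⁻¹‖ < 1) :
    IsUnit (subm (A - E) I I) ∧
      ‖(subm A Iᶜ Iᶜ - subm A Iᶜ I * (subm A I I)⁻¹ * subm A I Iᶜ)
          - (subm (A - E) Iᶜ Iᶜ
              - subm (A - E) Iᶜ I * (subm (A - E) I I)⁻¹ * subm (A - E) I Iᶜ)‖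
        ≤ δ * (1 + ‖(subm A I I)⁻¹ * subm A I Iᶜ‖) ^ 2 / (1 - δ * ‖(subm A I I)⁻¹‖) := by
  -- notation
  set B := subm A I I with hB
  set G := subm E I I with hG
  set C := subm A I Iᶜ with hC
  set F := subm E I Iᶜ with hF
  set Hm := subm E Iᶜ Iᶜ with hHm
  set Bi := B⁻¹ with hBi
  set W := Bi * C with hW
  -- basic norm bounds on submatrices of E
  have hGn : ‖G‖ ≤ δ := le_trans (norm_subm_le E I I) hEδ
  have hFn : ‖F‖ ≤ δ := le_trans (norm_subm_le E I Iᶜ) hEδ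
  have hHn : ‖Hm‖ ≤ δ := le_trans (norm_subm_le E Iᶜ Iᶜ) hEδ
  -- invertibility facts for B
  have hdet : IsUnit B.det := (Matrix.isUnit_iff_isUnit_det B).mp hinv
  have hBBi : B * Bi = 1 := Matrix.mul_nonsing_inv B hdet
  have hBiB : Bi * B = 1 := Matrix.nonsing_inv_mul B hdet
  -- symmetry facts
  have hBs : Bᵀ = B := subm_transpose_symm hA I I
  have hGs : Gᵀ = G := subm_transpose_symm hE I I
  have hCs : Cᵀ = subm A Iᶜ I := subm_transpose_symm hA I Iᶜ
  have hFs : Fᵀ = subm E Iᶜ I := subm_transpose_symm hE I Iᶜ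
  have hBis : Biᵀ = Bi := by rw [hBi, Matrix.transpose_nonsing_inv, hBs]
  -- the perturbation X and invertibility of B - G
  set X := Bi * G with hX
  have hXn : ‖X‖ ≤ δ * ‖Bi‖ := by
    calc ‖X‖ ≤ ‖Bi‖ * ‖G‖ := Matrix.l2_opNorm_mul _ _
    _ ≤ δ * ‖Bi‖ := by nlinarith [norm_nonneg Bi]
  have hX1 : ‖X‖ < 1 := lt_of_le_of_lt hXn hρ
  have hunit1 : IsUnit (1 - X) := isUnit_one_sub_of_norm_lt_one hX1
  have hfacB : B - G = B * (1 - X) := by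
    rw [Matrix.mul_sub, Matrix.mul_one, hX, ← Matrix.mul_assoc, hBBi, Matrix.one_mul]
  have hBGu : IsUnit (B - G) := by rw [hfacB]; exact hinv.mul hunit1
  have hfst : IsUnit (subm (A - E) I I) := by rw [subm_sub]; exact hBGu
  refine ⟨hfst, ?_⟩
  -- inverse of B - G and its norm
  set Ni := (B - G)⁻¹ with hNi
  have hdetBG : IsUnit (B - G).det := (Matrix.isUnit_iff_isUnit_det _).mp hBGu
  have hNl : (B - G) * Ni = 1 := Matrix.mul_nonsing_inv _ hdetBG
  have hNr : Ni * (B - G) = 1 := Matrix.nonsing_inv_mul _ hdetBG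
  have hBGs : (B - G)ᵀ = B - G := by rw [Matrix.transpose_sub, hBs, hGs]
  have hIXn : ‖(1 - X)⁻¹‖ ≤ (1 - ‖X‖)⁻¹ := by
    rw [Matrix.nonsing_inv_eq_ringInverse, ← geom_series_eq_inverse X hX1]
    have h1 := tsum_geometric_le_of_norm_lt_one X hX1
    have h2 : ‖(1 : Matrix I I ℝ)‖ ≤ 1 := norm_one_le_mat
    linarith
  have hr1 : (0:ℝ) < 1 - δ * ‖Bi‖ := by linarith
  have hNin : ‖Ni‖ ≤ (1 - δ * ‖Bi‖)⁻¹ * ‖Bi‖ := by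
    have h3 : (1 - ‖X‖)⁻¹ ≤ (1 - δ * ‖Bi‖)⁻¹ := by
      apply inv_anti₀ hr1; linarith
    calc ‖Ni‖ = ‖(1 - X)⁻¹ * Bi‖ := by rw [hNi, hfacB, Matrix.mul_inv_rev, hBi]
    _ ≤ ‖(1 - X)⁻¹‖ * ‖Bi‖ := Matrix.l2_opNorm_mul _ _
    _ ≤ (1 - δ * ‖Bi‖)⁻¹ * ‖Bi‖ := by
        have := norm_nonneg Bi
        nlinarith [le_trans hIXn h3, inv_nonneg.mpr hr1.le]
  -- the algebraic identity
  set u := C - F with hu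
  set D := F - G * W with hD
  have hBW : B * W = C := by rw [hW, ← Matrix.mul_assoc, hBBi, Matrix.one_mul]
  set V := (B - G) * W with hV
  have hD2 : D = V - u := by
    rw [hD, hu, hV, Matrix.sub_mul, hBW]; abel
  have hVtN : Vᵀ * Ni = Wᵀ := by
    rw [hV, Matrix.transpose_mul, hBGs, Matrix.mul_assoc, hNl, Matrix.mul_one]
  have hNV : Ni * V = W := by
    rw [hV, ← Matrix.mul_assoc, hNr, Matrix.one_mul]
  have hWtC : Wᵀ * C = Cᵀ * Bi * C := by
    rw [hW, Matrix.transpose_mul, hBis]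
  have e1 : Dᵀ * Ni * D = Wᵀ * V - Wᵀ * u - uᵀ * W + uᵀ * Ni * u := by
    rw [hD2]
    simp only [Matrix.transpose_sub, Matrix.sub_mul, Matrix.mul_sub]
    rw [hVtN, Matrix.mul_assoc uᵀ Ni V, hNV]
    abel
  have e2 : Wᵀ * V = Cᵀ * Bi * C - Wᵀ * (G * W) := by
    rw [hV, Matrix.sub_mul, hBW, Matrix.mul_sub, hWtC]
  have e3 : Wᵀ * u = Cᵀ * Bi * C - Wᵀ * F := by
    rw [hu, Matrix.mul_sub, hWtC]
  have e4 : uᵀ * W = Cᵀ * Bi * C - Fᵀ * W := by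
    rw [hu, Matrix.transpose_sub, Matrix.sub_mul, hW, ← Matrix.mul_assoc]
  -- rewrite the goal matrix
  have hgoalmat : (subm A Iᶜ Iᶜ - subm A Iᶜ I * Bi * C)
      - (subm (A - E) Iᶜ Iᶜ - subm (A - E) Iᶜ I * (subm (A - E) I I)⁻¹ * subm (A - E) I Iᶜ)
      = Dᵀ * Ni * D + (Wᵀ * (G * W) - Wᵀ * F - Fᵀ * W + Hm) := by
    simp only [subm_sub]
    rw [← hB, ← hG, ← hC, ← hF, ← hHm, ← hCs, ← hFs, ← Matrix.transpose_sub, ← hu, ← hNi,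
      e1, e2, e3, e4]
    abel
  rw [hgoalmat]
  -- norm bounds
  have hw0 : (0:ℝ) ≤ ‖W‖ := norm_nonneg W
  have hWt : ‖Wᵀ‖ = ‖W‖ := norm_transpose_real W
  have hDn : ‖D‖ ≤ δ * (1 + ‖W‖) := by
    rw [hD]
    calc ‖F - G * W‖ ≤ ‖F‖ + ‖G * W‖ := norm_sub_le _ _
    _ ≤ ‖F‖ + ‖G‖ * ‖W‖ := by linarith [Matrix.l2_opNorm_mul G W]
    _ ≤ δ * (1 + ‖W‖) := by nlinarith
  have hDt : ‖Dᵀ‖ = ‖D‖ := norm_transpose_real D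
  have hd0 : (0:ℝ) ≤ ‖D‖ := norm_nonneg D
  have hni0 : (0:ℝ) ≤ ‖Ni‖ := norm_nonneg Ni
  have hnb : (0:ℝ) ≤ (1 - δ * ‖Bi‖)⁻¹ * ‖Bi‖ :=
    mul_nonneg (inv_nonneg.mpr hr1.le) (norm_nonneg Bi)
  have n1 : ‖Dᵀ * Ni * D‖ ≤ (δ * (1 + ‖W‖)) ^ 2 * ((1 - δ * ‖Bi‖)⁻¹ * ‖Bi‖) := by
    have c1 : ‖Dᵀ * Ni * D‖ ≤ ‖D‖ * ‖Ni‖ * ‖D‖ := by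
      calc ‖Dᵀ * Ni * D‖ ≤ ‖Dᵀ * Ni‖ * ‖D‖ := Matrix.l2_opNorm_mul _ _
      _ ≤ (‖Dᵀ‖ * ‖Ni‖) * ‖D‖ :=
          mul_le_mul_of_nonneg_right (Matrix.l2_opNorm_mul _ _) hd0
      _ = ‖D‖ * ‖Ni‖ * ‖D‖ := by rw [hDt]
    have t1 : ‖D‖ * ‖Ni‖ ≤ (δ * (1 + ‖W‖)) * ((1 - δ * ‖Bi‖)⁻¹ * ‖Bi‖) :=
      mul_le_mul hDn hNin hni0 (by nlinarith)
    have t2 : ‖D‖ * ‖Ni‖ * ‖D‖ ≤ (δ * (1 + ‖W‖)) * ((1 - δ * ‖Bi‖)⁻¹ * ‖Bi‖) * (δ * (1 + ‖W‖)) :=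
      mul_le_mul t1 hDn hd0 (mul_nonneg (by nlinarith) hnb)
    calc ‖Dᵀ * Ni * D‖ ≤ (δ * (1 + ‖W‖)) * ((1 - δ * ‖Bi‖)⁻¹ * ‖Bi‖) * (δ * (1 + ‖W‖)) :=
        le_trans c1 t2
    _ = (δ * (1 + ‖W‖)) ^ 2 * ((1 - δ * ‖Bi‖)⁻¹ * ‖Bi‖) := by ring
  have n2 : ‖Wᵀ * (G * W)‖ ≤ δ * ‖W‖ ^ 2 := by
    have a2 : ‖G * W‖ ≤ δ * ‖W‖ := by
      calc ‖G * W‖ ≤ ‖G‖ * ‖W‖ := Matrix.l2_opNorm_mul _ _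
      _ ≤ δ * ‖W‖ := mul_le_mul_of_nonneg_right hGn hw0
    calc ‖Wᵀ * (G * W)‖ ≤ ‖Wᵀ‖ * ‖G * W‖ := Matrix.l2_opNorm_mul _ _
    _ = ‖W‖ * ‖G * W‖ := by rw [hWt]
    _ ≤ ‖W‖ * (δ * ‖W‖) := mul_le_mul_of_nonneg_left a2 hw0
    _ = δ * ‖W‖ ^ 2 := by ring
  have n3 : ‖Wᵀ * F‖ ≤ δ * ‖W‖ := by
    calc ‖Wᵀ * F‖ ≤ ‖Wᵀ‖ * ‖F‖ := Matrix.l2_opNorm_mul _ _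
    _ = ‖W‖ * ‖F‖ := by rw [hWt]
    _ ≤ ‖W‖ * δ := mul_le_mul_of_nonneg_left hFn hw0
    _ = δ * ‖W‖ := by ring
  have n4 : ‖Fᵀ * W‖ ≤ δ * ‖W‖ := by
    calc ‖Fᵀ * W‖ ≤ ‖Fᵀ‖ * ‖W‖ := Matrix.l2_opNorm_mul _ _
    _ = ‖F‖ * ‖W‖ := by rw [norm_transpose_real F]; rfl
    _ ≤ δ * ‖W‖ := mul_le_mul_of_nonneg_right hFn hw0
  have ntot : ‖Dᵀ * Ni * D + (Wᵀ * (G * W) - Wᵀ * F - Fᵀ * W + Hm)‖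
      ≤ (δ * (1 + ‖W‖)) ^ 2 * ((1 - δ * ‖Bi‖)⁻¹ * ‖Bi‖)
        + (δ * ‖W‖ ^ 2 + δ * ‖W‖ + δ * ‖W‖ + δ) := by
    calc ‖Dᵀ * Ni * D + (Wᵀ * (G * W) - Wᵀ * F - Fᵀ * W + Hm)‖
        ≤ ‖Dᵀ * Ni * D‖ + ‖Wᵀ * (G * W) - Wᵀ * F - Fᵀ * W + Hm‖ := norm_add_le _ _
    _ ≤ ‖Dᵀ * Ni * D‖ + (‖Wᵀ * (G * W) - Wᵀ * F - Fᵀ * W‖ + ‖Hm‖) := by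
        linarith [norm_add_le (Wᵀ * (G * W) - Wᵀ * F - Fᵀ * W) Hm]
    _ ≤ ‖Dᵀ * Ni * D‖ + (‖Wᵀ * (G * W) - Wᵀ * F‖ + ‖Fᵀ * W‖ + ‖Hm‖) := by
        linarith [norm_sub_le (Wᵀ * (G * W) - Wᵀ * F) (Fᵀ * W)]
    _ ≤ ‖Dᵀ * Ni * D‖ + (‖Wᵀ * (G * W)‖ + ‖Wᵀ * F‖ + ‖Fᵀ * W‖ + ‖Hm‖) := by
        linarith [norm_sub_le (Wᵀ * (G * W)) (Wᵀ * F)]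
    _ ≤ _ := by linarith
  refine le_trans ntot (le_of_eq ?_)
  have hne : (1 : ℝ) - δ * ‖Bi‖ ≠ 0 := ne_of_gt hr1
  field_simp
  ring
end
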